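/- arXiv:math/0603008 — 2 statements merged into one kernel-verified Lean document; each statement's English description precedes it below -/
import Mathlib

section
/- Let X be a complex Banach space and let 𝓛 = 𝓐 + 𝓗 where 𝓐 and 𝓗 are bounded linear operators on X. Suppose for some integer k ≥ 1 and real numbers γ, δ one has ‖𝓐^k‖ ≤ γ < 1 and ‖𝓗‖ ≤ δ < 1. Set C = Σ_{i=1}^{k} binom(k,i) ‖𝓐‖^{k−i} δ^{i−1}. Then the spectral radius of 𝓛 satisfies R_Sp(𝓛) ≤ (γ + C·δ)^{1/k} (equivalently, when γ > 0, R_Sp(𝓛) ≤ γ^{1/k}(1 + C·δ/γ)^{1/k}). -/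
open scoped ENNReal

/-- In a normed ring, `‖(a+h)^n - a^n‖ ≤ (‖a‖+‖h‖)^n - ‖a‖^n`. -/
lemma pow_sub_pow_norm_le {R : Type*} [NormedRing R] (a h : R) (n : ℕ) :
    ‖(a + h) ^ n - a ^ n‖ ≤ (‖a‖ + ‖h‖) ^ n - ‖a‖ ^ n := by
  induction n with
  | zero => simp
  | succ n ih =>
    have hpow : ‖h * a ^ n‖ ≤ ‖h‖ * ‖a‖ ^ n := by
      rcases Nat.eq_zero_or_pos n with rfl | hn
      · simp
      · exact (norm_mul_le _ _).trans (by gcongr; exact norm_pow_le' a hn)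
    have key : (a + h) ^ (n + 1) - a ^ (n + 1)
        = (a + h) * ((a + h) ^ n - a ^ n) + h * a ^ n := by
      rw [pow_succ', pow_succ']
      noncomm_ring
    rw [key]
    calc ‖(a + h) * ((a + h) ^ n - a ^ n) + h * a ^ n‖
        ≤ ‖(a + h) * ((a + h) ^ n - a ^ n)‖ + ‖h * a ^ n‖ := norm_add_le _ _
      _ ≤ ‖a + h‖ * ‖(a + h) ^ n - a ^ n‖ + ‖h‖ * ‖a‖ ^ n :=
          add_le_add (norm_mul_le _ _) hpow
      _ ≤ (‖a‖ + ‖h‖) * ((‖a‖ + ‖h‖) ^ n - ‖a‖ ^ n) + ‖h‖ * ‖a‖ ^ n := by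
          have h1 : ‖(a + h) ^ n - a ^ n‖ ≤ (‖a‖ + ‖h‖) ^ n - ‖a‖ ^ n := ih
          have h2 : ‖a + h‖ ≤ ‖a‖ + ‖h‖ := norm_add_le _ _
          have h3 : (0 : ℝ) ≤ (‖a‖ + ‖h‖) ^ n - ‖a‖ ^ n :=
            (norm_nonneg _).trans ih
          nlinarith [norm_nonneg ((a + h) ^ n - a ^ n), norm_nonneg (a + h)]
      _ = (‖a‖ + ‖h‖) ^ (n + 1) - ‖a‖ ^ (n + 1) := by ring

/-- Lemma 6.2: if `𝓛 = 𝓐 + 𝓗` with `‖𝓐^k‖ ≤ γ < 1` and `‖𝓗‖ ≤ δ < 1`, and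
`C = Σ_{i=1}^k binom(k,i) ‖𝓐‖^{k-i} δ^{i-1}`, then the spectral radius of `𝓛`
satisfies `R_Sp(𝓛) ≤ (γ + C δ)^{1/k}`. -/
theorem stmt4 {X : Type*} [NormedAddCommGroup X] [NormedSpace ℂ X] [CompleteSpace X]
    (A H : X →L[ℂ] X) (k : ℕ) (hk : 1 ≤ k) (γ δ : ℝ)
    (hA : ‖A ^ k‖ ≤ γ) (hγ : γ < 1) (hH : ‖H‖ ≤ δ) (hδ : δ < 1)
    (C : ℝ)
    (hC : C = ∑ i ∈ Finset.Icc 1 k, (k.choose i : ℝ) * ‖A‖ ^ (k - i) * δ ^ (i - 1)) :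
    spectralRadius ℂ (A + H) ≤ ENNReal.ofReal ((γ + C * δ) ^ ((1 : ℝ) / k)) := by
  have hδ0 : 0 ≤ δ := (norm_nonneg H).trans hH
  have hγ0 : 0 ≤ γ := (norm_nonneg _).trans hA
  -- (‖A‖ + δ)^k - ‖A‖^k ≤ C * δ
  have hCδ : (‖A‖ + δ) ^ k - ‖A‖ ^ k ≤ C * δ := by
    have hbinom : (‖A‖ + δ) ^ k
        = ∑ i ∈ Finset.range (k + 1), δ ^ i * ‖A‖ ^ (k - i) * (k.choose i : ℝ) := by
      rw [add_comm]; exact add_pow δ ‖A‖ k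
    have hCd : C * δ = ∑ i ∈ Finset.Icc 1 k, δ ^ i * ‖A‖ ^ (k - i) * (k.choose i : ℝ) := by
      rw [hC, Finset.sum_mul]
      refine Finset.sum_congr rfl fun i hi => ?_
      have hi1 : 1 ≤ i := (Finset.mem_Icc.mp hi).1
      have hpow : δ ^ (i - 1) * δ = δ ^ i := by
        rw [← pow_succ, Nat.sub_add_cancel hi1]
      rw [← hpow]; ring
    have hsplit : Finset.range (k + 1) = insert 0 (Finset.Icc 1 k) := by
      ext i
      simp only [Finset.mem_range, Finset.mem_insert, Finset.mem_Icc, Nat.lt_succ_iff]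
      omega
    rw [hCd, hbinom, hsplit, Finset.sum_insert (by simp)]
    simp
  -- key norm bound
  have hkey : ‖(A + H) ^ k‖ ≤ γ + C * δ := by
    have h1 : ‖(A + H) ^ k - A ^ k‖ ≤ (‖A‖ + ‖H‖) ^ k - ‖A‖ ^ k :=
      pow_sub_pow_norm_le A H k
    have h2 : (‖A‖ + ‖H‖) ^ k ≤ (‖A‖ + δ) ^ k :=
      pow_le_pow_left₀ (by positivity) (add_le_add_right hH ‖A‖) k
    calc ‖(A + H) ^ k‖ = ‖A ^ k + ((A + H) ^ k - A ^ k)‖ := by congr 1; abel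
      _ ≤ ‖A ^ k‖ + ‖(A + H) ^ k - A ^ k‖ := norm_add_le _ _
      _ ≤ γ + C * δ := by
          refine add_le_add hA (h1.trans ?_)
          linarith
  have hpos : (0 : ℝ) ≤ γ + C * δ := by
    have : ‖A‖ ^ k ≤ (‖A‖ + δ) ^ k :=
      pow_le_pow_left₀ (norm_nonneg A) (by linarith) k
    linarith
  -- spectral radius bound
  obtain ⟨n, rfl⟩ : ∃ n, k = n + 1 := ⟨k - 1, (Nat.succ_pred_eq_of_pos hk).symm⟩
  have hsr := spectrum.spectralRadius_le_pow_nnnorm_pow_one_div ℂ (A + H) n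
  have hexp : (0 : ℝ) ≤ 1 / ((n : ℝ) + 1) := by positivity
  have hone : (‖(1 : X →L[ℂ] X)‖₊ : ℝ≥0∞) ^ ((1 : ℝ) / ((n : ℝ) + 1)) ≤ 1 := by
    apply ENNReal.rpow_le_one _ hexp
    have h1 : ‖(1 : X →L[ℂ] X)‖ ≤ 1 := ContinuousLinearMap.norm_id_le
    exact_mod_cast h1
  have h2 : ((‖(A + H) ^ (n + 1)‖₊ : ℝ≥0∞)) ^ ((1 : ℝ) / ((n : ℝ) + 1))
      ≤ ENNReal.ofReal ((γ + C * δ) ^ ((1 : ℝ) / ((n + 1 : ℕ) : ℝ))) := by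
    rw [← ENNReal.ofReal_rpow_of_nonneg hpos (by positivity)]
    have hcast : ((n + 1 : ℕ) : ℝ) = (n : ℝ) + 1 := by push_cast; ring
    rw [hcast]
    apply ENNReal.rpow_le_rpow _ hexp
    rw [← ENNReal.ofReal_coe_nnreal, coe_nnnorm]
    exact ENNReal.ofReal_le_ofReal hkey
  calc spectralRadius ℂ (A + H)
      ≤ (‖(A + H) ^ (n + 1)‖₊ : ℝ≥0∞) ^ ((1 : ℝ) / ((n : ℝ) + 1)) *
        (‖(1 : X →L[ℂ] X)‖₊ : ℝ≥0∞) ^ ((1 : ℝ) / ((n : ℝ) + 1)) := hsr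
    _ ≤ (‖(A + H) ^ (n + 1)‖₊ : ℝ≥0∞) ^ ((1 : ℝ) / ((n : ℝ) + 1)) * 1 :=
        mul_le_mul_right hone _
    _ = (‖(A + H) ^ (n + 1)‖₊ : ℝ≥0∞) ^ ((1 : ℝ) / ((n : ℝ) + 1)) := mul_one _
    _ ≤ ENNReal.ofReal ((γ + C * δ) ^ ((1 : ℝ) / ((n + 1 : ℕ) : ℝ))) := h2
end

section
/- Let X and Y be complex Banach spaces, let r > 0, and let R be an analytic map from the open ball B(f̂, r) ⊂ X to Y. Let 𝓛 = DR(f̂) denote the Fréchet derivative of R at f̂. Let h ∈ X with ‖h‖ < r and let 0 < ε < 1. Then ‖R(f̂ + εh) − R(f̂) − ε·𝓛h‖ ≤ (ε²/(1−ε)) · sup_{s ∈ ℂ, |s| ≤ 1} ‖R(f̂ + s·h) − R(f̂)‖. -/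
open Metric Complex Finset

/-- Proposition 6.3: a Cauchy-type estimate for an analytic operator `R`
between complex Banach spaces, analytic on the ball `B(f̂, r)`.  For `‖h‖ < r`
and `0 < ε < 1`, with `𝓛 = DR(f̂)` the Fréchet derivative,
`‖R(f̂+εh) − R(f̂) − ε 𝓛 h‖ ≤ (ε²/(1−ε)) · sup_{|s|≤1} ‖R(f̂+s h) − R(f̂)‖`. -/
theorem stmt7 {X Y : Type*} [NormedAddCommGroup X] [NormedSpace ℂ X] [CompleteSpace X]
    [NormedAddCommGroup Y] [NormedSpace ℂ Y] [CompleteSpace Y]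
    (r : ℝ) (hr : 0 < r) (fhat : X) (R : X → Y)
    (hR : AnalyticOnNhd ℂ R (Metric.ball fhat r))
    (h : X) (hh : ‖h‖ < r) (ε : ℝ) (hε0 : 0 < ε) (hε1 : ε < 1) :
    ‖R (fhat + (ε : ℂ) • h) - R fhat - (ε : ℂ) • (fderiv ℂ R fhat h)‖ ≤
      ε ^ 2 / (1 - ε) *
        ⨆ s : Metric.closedBall (0 : ℂ) 1, ‖R (fhat + (s : ℂ) • h) - R fhat‖ := by
  set g : ℂ → Y := fun s => R (fhat + s • h) - R fhat with hg
  have hmem : ∀ s : ℂ, ‖s‖ ≤ 1 → fhat + s • h ∈ ball fhat r := by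
    intro s hs
    simp only [mem_ball, dist_eq_norm, add_sub_cancel_left, norm_smul]
    calc ‖s‖ * ‖h‖ ≤ 1 * ‖h‖ := mul_le_mul_of_nonneg_right hs (norm_nonneg _)
      _ = ‖h‖ := one_mul _
      _ < r := hh
  have hdiff : ∀ s : ℂ, ‖s‖ ≤ 1 → DifferentiableAt ℂ g s := by
    intro s hs
    have h1 : DifferentiableAt ℂ (fun t : ℂ => fhat + t • h) s :=
      (differentiableAt_const _).add ((differentiableAt_id).smul_const h)
    exact ((hR _ (hmem s hs)).differentiableAt.comp s h1).sub_const _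
  have hdiffOn : DifferentiableOn ℂ g (closedBall (0 : ℂ) (1 : NNReal)) := fun s hs =>
    (hdiff s (by simpa [dist_eq_norm] using hs)).differentiableWithinAt
  set p := cauchyPowerSeries g 0 1 with hp
  have hps : HasFPowerSeriesOnBall g p 0 (1 : NNReal) :=
    hdiffOn.hasFPowerSeriesOnBall (by norm_num)
  set M : ℝ := ⨆ s : Metric.closedBall (0 : ℂ) 1, ‖R (fhat + (s : ℂ) • h) - R fhat‖ with hM
  have hcontOn : ContinuousOn g (closedBall (0 : ℂ) 1) := fun s hs =>
    (hdiff s (by simpa [dist_eq_norm] using hs)).continuousAt.continuousWithinAt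
  have hbdd : BddAbove (Set.range fun s : Metric.closedBall (0 : ℂ) 1 =>
      ‖R (fhat + (s : ℂ) • h) - R fhat‖) := by
    have := ((isCompact_closedBall (0 : ℂ) 1).image_of_continuousOn hcontOn.norm).bddAbove
    rwa [← Set.range_restrict] at this
  have hMle : ∀ s : ℂ, ‖s‖ ≤ 1 → ‖g s‖ ≤ M :=
    fun s hs => le_ciSup hbdd (⟨s, by simpa [dist_eq_norm] using hs⟩ :
      Metric.closedBall (0 : ℂ) 1)
  have hM0 : 0 ≤ M := le_trans (norm_nonneg _) (hMle 0 (by simp))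
  -- coefficient bound
  have hcoeff : ∀ n : ℕ, ‖p.coeff n‖ ≤ M := by
    intro n
    have h1 : ‖p n‖ ≤ ((2 * Real.pi)⁻¹ * ∫ θ : ℝ in (0)..2 * Real.pi,
        ‖g (circleMap 0 1 θ)‖) * |(1:ℝ)|⁻¹ ^ n := norm_cauchyPowerSeries_le g 0 1 n
    simp only [abs_one, inv_one, one_pow, mul_one] at h1
    have hcmem : ∀ θ : ℝ, circleMap 0 1 θ ∈ closedBall (0 : ℂ) 1 := by
      intro θ; simp [circleMap, dist_eq_norm]
    have h2 : (∫ θ : ℝ in (0)..2 * Real.pi, ‖g (circleMap 0 1 θ)‖) ≤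
        ∫ _ : ℝ in (0)..2 * Real.pi, M := by
      apply intervalIntegral.integral_mono_on Real.two_pi_pos.le
      · exact ((hcontOn.norm.comp_continuous (continuous_circleMap 0 1)
          hcmem)).intervalIntegrable _ _
      · exact intervalIntegrable_const
      · intro θ _
        exact hMle _ (by simpa [dist_eq_norm] using hcmem θ)
    have h3 : ‖p n‖ ≤ M := by
      calc ‖p n‖ ≤ (2 * Real.pi)⁻¹ * ∫ θ : ℝ in (0)..2 * Real.pi, ‖g (circleMap 0 1 θ)‖ := h1
        _ ≤ (2 * Real.pi)⁻¹ * (2 * Real.pi * M) := by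
            apply mul_le_mul_of_nonneg_left _ (by positivity)
            simpa using h2
        _ = M := by field_simp
    calc ‖p.coeff n‖ = ‖p n fun _ => (1:ℂ)‖ := rfl
      _ ≤ ‖p n‖ * ∏ _i : Fin n, ‖(1:ℂ)‖ := (p n).le_opNorm _
      _ ≤ M := by simpa using h3
  have hεball : (ε : ℂ) ∈ EMetric.ball (0 : ℂ) (1 : NNReal) := by
    have h1 : ‖(ε : ℂ)‖₊ < 1 := by
      rw [← NNReal.coe_lt_coe]
      simpa [abs_of_pos hε0] using hε1
    show edist (ε : ℂ) 0 < ((1 : NNReal) : ENNReal)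
    rw [edist_zero_right, ← ofReal_norm_eq_enorm, ← coe_nnnorm, ENNReal.ofReal_coe_nnreal]
    exact_mod_cast h1
  have hsum : HasSum (fun n => (ε:ℂ) ^ n • p.coeff n) (g (ε : ℂ)) := by
    have := hps.hasSum hεball
    simpa only [FormalMultilinearSeries.apply_eq_pow_smul_coeff, zero_add] using this
  have hc0 : p.coeff 0 = 0 := by
    have h0 : p 0 (fun _ => (1:ℂ)) = g 0 := hps.coeff_zero _
    have hz : g 0 = 0 := by simp [hg]
    rw [show p.coeff 0 = p 0 (fun _ => 1) from rfl, h0, hz]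
  have hc1 : p.coeff 1 = fderiv ℂ R fhat h := by
    have hd : HasDerivAt g (fderiv ℂ R fhat h) 0 := by
      have h1 : HasDerivAt (fun t : ℂ => fhat + t • h) h 0 := by
        simpa using ((hasDerivAt_id (0:ℂ)).smul_const h).const_add fhat
      have h2 : HasFDerivAt R (fderiv ℂ R fhat) (fhat + (0:ℂ) • h) := by
        simpa using (hR fhat (by simpa using hmem 0 (by simp))).differentiableAt.hasFDerivAt
      rw [hg]
      simpa using (h2.comp_hasDerivAt 0 h1).sub_const (R fhat)
    have h3 : deriv g 0 = p 1 fun _ => 1 := hps.hasFPowerSeriesAt.deriv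
    have h4 : p.coeff 1 = p 1 fun _ => 1 := rfl
    rw [h4, ← h3, hd.deriv]
  have hsum2 : HasSum (fun n => (ε:ℂ) ^ (n+2) • p.coeff (n+2))
      (g (ε:ℂ) - ∑ i ∈ range 2, (ε:ℂ) ^ i • p.coeff i) :=
    (hasSum_nat_add_iff' 2).mpr hsum
  have key : g (ε:ℂ) - ∑ i ∈ range 2, (ε:ℂ) ^ i • p.coeff i
      = R (fhat + (ε : ℂ) • h) - R fhat - (ε : ℂ) • (fderiv ℂ R fhat h) := by
    rw [Finset.sum_range_succ, Finset.sum_range_one, hc0, hc1]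
    simp [hg]
  rw [← key]
  -- geometric bound
  have hgeo : HasSum (fun n : ℕ => M * ε ^ (n+2)) (M * (ε ^ 2 / (1 - ε))) := by
    have h1 := (hasSum_geometric_of_lt_one hε0.le hε1).mul_left (M * ε ^ 2)
    have h2 : (fun n : ℕ => M * ε ^ (n+2)) = fun n : ℕ => M * ε ^ 2 * ε ^ n := by
      funext n; ring
    rw [h2]
    convert h1 using 1
    · rfl
    · ring
  have hnorm : ‖g (ε:ℂ) - ∑ i ∈ range 2, (ε:ℂ) ^ i • p.coeff i‖ ≤
      ∑' n : ℕ, M * ε ^ (n + 2) := by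
    rw [← hsum2.tsum_eq]
    have hb : ∀ n : ℕ, ‖(ε:ℂ) ^ (n+2) • p.coeff (n+2)‖ ≤ M * ε ^ (n + 2) := by
      intro n
      rw [norm_smul]
      calc ‖(ε:ℂ) ^ (n+2)‖ * ‖p.coeff (n+2)‖ ≤ ε ^ (n+2) * M := by
            apply mul_le_mul _ (hcoeff _) (norm_nonneg _) (by positivity)
            simp [abs_of_pos hε0]
        _ = M * ε ^ (n+2) := mul_comm _ _
    have hsummable : Summable fun n : ℕ => ‖(ε:ℂ) ^ (n+2) • p.coeff (n+2)‖ :=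
      Summable.of_nonneg_of_le (fun n => norm_nonneg _) hb hgeo.summable
    exact (norm_tsum_le_tsum_norm hsummable).trans (hsummable.tsum_le_tsum hb hgeo.summable)
  refine hnorm.trans ?_
  rw [hgeo.tsum_eq, mul_comm]
end
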